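/- Let k : ℝ^d → ℝ be a measurable function with 0 ≤ k(w) ≤ M for all w ∈ ℝ^d, and let g be its Gaussian smoothing with parameter σ > 0. Then the gradient of g is uniformly bounded: for every μ ∈ ℝ^d, ‖∇g(μ)‖² ≤ d·M²/σ². -/

import Mathlib

set_option synthInstance.maxHeartbeats 1000000
set_option maxHeartbeats 1000000


open MeasureTheory Real

/-- The Gaussian smoothing of `k : ℝ^d → ℝ` with parameter `σ`:
`g(μ) = ∫ (2πσ²)^(−d/2) · exp(−‖w − μ‖²/(2σ²)) · k(w) dw = E_{w ∼ N(μ, σ²I)}[k(w)]`. -/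
noncomputable def gaussSmooth (d : ℕ) (σ : ℝ) (k : EuclideanSpace ℝ (Fin d) → ℝ) :
    EuclideanSpace ℝ (Fin d) → ℝ :=
  fun μ => ∫ w, (2 * π * σ ^ 2) ^ (-(d : ℝ) / 2) * Real.exp (-‖w - μ‖ ^ 2 / (2 * σ ^ 2)) * k w


lemma aux_int_exp {d : ℕ} {b : ℝ} (hb : 0 < b) :
    Integrable (fun v : EuclideanSpace ℝ (Fin d) => rexp (-b * ‖v‖ ^ 2)) := by
  have h := (GaussianFourier.integrable_cexp_neg_mul_sq_norm_add
      (V := EuclideanSpace ℝ (Fin d)) (b := (b : ℂ)) (by simpa using hb) 0 0).norm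
  refine h.congr (Filter.Eventually.of_forall fun v => ?_)
  simp [Complex.norm_exp, ← Complex.ofReal_pow]

lemma aux_cont {d : ℕ} (b : ℝ) :
    Continuous (fun v : EuclideanSpace ℝ (Fin d) => rexp (-b * ‖v‖ ^ 2)) := by
  fun_prop

lemma aux_int_sq {d : ℕ} {b : ℝ} (hb : 0 < b) :
    Integrable (fun v : EuclideanSpace ℝ (Fin d) => ‖v‖ ^ 2 * rexp (-b * ‖v‖ ^ 2)) := by
  refine ((aux_int_exp (half_pos hb)).const_mul (2 / b)).mono'
    ((continuous_norm.pow 2).mul (aux_cont b)).aestronglyMeasurable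
    (Filter.Eventually.of_forall fun v => ?_)
  rw [Real.norm_eq_abs, abs_of_nonneg (by positivity)]
  have h1 : b / 2 * ‖v‖ ^ 2 ≤ rexp (b / 2 * ‖v‖ ^ 2) :=
    le_trans (by linarith [Real.add_one_le_exp (b / 2 * ‖v‖ ^ 2)]) le_rfl
  have h2 : rexp (b / 2 * ‖v‖ ^ 2) * rexp (-b * ‖v‖ ^ 2) = rexp (-(b / 2) * ‖v‖ ^ 2) := by
    rw [← Real.exp_add]; ring_nf
  have h3 := Real.exp_pos (-b * ‖v‖ ^ 2)
  have h5 : ‖v‖ ^ 2 * rexp (-b * ‖v‖ ^ 2) ≤ 2 / b * (rexp (b / 2 * ‖v‖ ^ 2) * rexp (-b * ‖v‖ ^ 2)) := by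
    rw [div_mul_eq_mul_div, ← mul_assoc, le_div_iff₀ hb]
    nlinarith
  calc ‖v‖ ^ 2 * rexp (-b * ‖v‖ ^ 2) ≤ 2 / b * (rexp (b / 2 * ‖v‖ ^ 2) * rexp (-b * ‖v‖ ^ 2)) := h5
    _ = 2 / b * rexp (-(b / 2) * ‖v‖ ^ 2) := by rw [h2]

lemma aux_int_norm {d : ℕ} {b : ℝ} (hb : 0 < b) :
    Integrable (fun v : EuclideanSpace ℝ (Fin d) => ‖v‖ * rexp (-b * ‖v‖ ^ 2)) := by
  refine ((aux_int_exp hb).add (aux_int_sq hb)).mono'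
    (continuous_norm.mul (aux_cont b)).aestronglyMeasurable
    (Filter.Eventually.of_forall fun v => ?_)
  rw [Real.norm_eq_abs, abs_of_nonneg (by positivity)]
  have h3 := (Real.exp_pos (-b * ‖v‖ ^ 2)).le
  simp only [Pi.add_apply]
  nlinarith [sq_nonneg (‖v‖ - 1)]

lemma aux_I0 {d : ℕ} {b : ℝ} (hb : 0 < b) :
    ∫ v : EuclideanSpace ℝ (Fin d), rexp (-b * ‖v‖ ^ 2) = π ^ ((d : ℝ) / 2) * b ^ (-(d : ℝ) / 2) := by
  rw [GaussianFourier.integral_rexp_neg_mul_sq_norm hb, finrank_euclideanSpace_fin,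
    Real.div_rpow pi_pos.le hb.le, neg_div, Real.rpow_neg hb.le, div_eq_mul_inv]

lemma aux_moment {d : ℕ} {b : ℝ} (hb : 0 < b) :
    ∫ v : EuclideanSpace ℝ (Fin d), ‖v‖ ^ 2 * rexp (-b * ‖v‖ ^ 2)
      = (d : ℝ) / 2 * π ^ ((d : ℝ) / 2) * (b ^ (-(d : ℝ) / 2) * b⁻¹) := by
  set r : ℝ := (d : ℝ) / 2 with hr
  have hbound : ∀ (v : EuclideanSpace ℝ (Fin d)), ∀ c ∈ Metric.ball b (b / 2),
      ‖-(‖v‖ ^ 2 * rexp (-c * ‖v‖ ^ 2))‖ ≤ ‖v‖ ^ 2 * rexp (-(b / 2) * ‖v‖ ^ 2) := by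
    intro v c hc
    have hc2 : b / 2 < c := by
      have := abs_lt.mp (by simpa [Real.dist_eq] using hc)
      linarith [this.1]
    rw [norm_neg, Real.norm_eq_abs, abs_of_nonneg (by positivity)]
    have h : -c * ‖v‖ ^ 2 ≤ -(b / 2) * ‖v‖ ^ 2 := by nlinarith [sq_nonneg ‖v‖]
    exact mul_le_mul_of_nonneg_left (Real.exp_le_exp.mpr h) (by positivity)
  have hderiv : ∀ (v : EuclideanSpace ℝ (Fin d)), ∀ c ∈ Metric.ball b (b / 2),
      HasDerivAt (fun x : ℝ => rexp (-x * ‖v‖ ^ 2)) (-(‖v‖ ^ 2 * rexp (-c * ‖v‖ ^ 2))) c := by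
    intro v c _
    have h := ((hasDerivAt_neg c).mul_const (‖v‖ ^ 2)).exp
    convert h using 1
    ring
  have key := hasDerivAt_integral_of_dominated_loc_of_deriv_le (μ := volume)
      (F := fun (c : ℝ) (v : EuclideanSpace ℝ (Fin d)) => rexp (-c * ‖v‖ ^ 2))
      (F' := fun (c : ℝ) (v : EuclideanSpace ℝ (Fin d)) => -(‖v‖ ^ 2 * rexp (-c * ‖v‖ ^ 2)))
      (x₀ := b) (s := Metric.ball b (b / 2))
      (bound := fun v => ‖v‖ ^ 2 * rexp (-(b / 2) * ‖v‖ ^ 2))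
      (Metric.ball_mem_nhds b (half_pos hb))
      (Filter.Eventually.of_forall fun c => (aux_cont c).aestronglyMeasurable)
      (aux_int_exp hb)
      (((continuous_norm.pow 2).mul (aux_cont b)).neg.aestronglyMeasurable)
      (Filter.Eventually.of_forall hbound)
      (aux_int_sq (half_pos hb))
      (Filter.Eventually.of_forall hderiv)
  have hG : HasDerivAt (fun c : ℝ => π ^ r * c ^ (-r)) (π ^ r * (-r * b ^ (-r - 1))) b :=
    HasDerivAt.const_mul _ (Real.hasDerivAt_rpow_const (Or.inl hb.ne'))
  have heq : (fun c : ℝ => π ^ r * c ^ (-r)) =ᶠ[nhds b]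
      (fun c : ℝ => ∫ v : EuclideanSpace ℝ (Fin d), rexp (-c * ‖v‖ ^ 2)) := by
    filter_upwards [Ioi_mem_nhds hb] with c hc
    rw [GaussianFourier.integral_rexp_neg_mul_sq_norm hc, finrank_euclideanSpace_fin,
      Real.div_rpow pi_pos.le (le_of_lt hc), Real.rpow_neg (le_of_lt hc), div_eq_mul_inv]
  have h3 := (hG.congr_of_eventuallyEq heq.symm).unique key.2
  have h4 := congrArg Neg.neg h3
  rw [← integral_neg] at h4
  simp only [neg_neg] at h4
  rw [← h4, Real.rpow_sub hb, Real.rpow_one, show -(d:ℝ)/2 = -r from by rw [hr]; ring]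
  ring

theorem stmt_7 (d : ℕ) (hd : 1 ≤ d) (σ M : ℝ) (hσ : 0 < σ) (hM : 0 < M)
    (k : EuclideanSpace ℝ (Fin d) → ℝ) (hmeas : Measurable k)
    (hk0 : ∀ w, 0 ≤ k w) (hkM : ∀ w, k w ≤ M)
    (g : EuclideanSpace ℝ (Fin d) → ℝ) (hg : g = gaussSmooth d σ k)
    (μ : EuclideanSpace ℝ (Fin d)) :
    ‖gradient g μ‖ ^ 2 ≤ d * M ^ 2 / σ ^ 2 := by
  subst hg
  have hσ2 : (0:ℝ) < σ ^ 2 := by positivity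
  set C : ℝ := (2 * π * σ ^ 2) ^ (-(d : ℝ) / 2) with hC
  have hCpos : 0 < C := Real.rpow_pos_of_pos (by positivity) _
  set b : ℝ := (2 * σ ^ 2)⁻¹ with hb
  have hbpos : 0 < b := by positivity
  set F' : EuclideanSpace ℝ (Fin d) → EuclideanSpace ℝ (Fin d) →
      (EuclideanSpace ℝ (Fin d) →L[ℝ] ℝ) :=
    fun x w => (C * rexp (-‖w - x‖ ^ 2 / (2 * σ ^ 2)) * k w * (σ ^ 2)⁻¹) • (innerSL ℝ (w - x))
    with hF'
  -- pointwise differentiability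
  have hdiff : ∀ (w : EuclideanSpace ℝ (Fin d)), ∀ (x : EuclideanSpace ℝ (Fin d)),
      HasFDerivAt (fun y => C * rexp (-‖w - y‖ ^ 2 / (2 * σ ^ 2)) * k w) (F' x w) x := by
    intro w x
    have base : HasFDerivAt (fun y : EuclideanSpace ℝ (Fin d) => ‖w - y‖ ^ 2)
        (2 • (innerSL ℝ (w - x)).comp (-(ContinuousLinearMap.id ℝ _))) x := by
      have h1 : HasFDerivAt (fun y : EuclideanSpace ℝ (Fin d) => w - y)
          (-(ContinuousLinearMap.id ℝ _)) x := (hasFDerivAt_id x).const_sub w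
      exact h1.norm_sq
    have h2 := (((base.const_mul (-(2 * σ ^ 2)⁻¹)).exp).const_mul C).mul_const (k w)
    have h3 : (fun y : EuclideanSpace ℝ (Fin d) =>
        C * rexp (-(2 * σ ^ 2)⁻¹ * ‖w - y‖ ^ 2) * k w)
        = fun y => C * rexp (-‖w - y‖ ^ 2 / (2 * σ ^ 2)) * k w := by
      funext y
      rw [show -(2 * σ ^ 2)⁻¹ * ‖w - y‖ ^ 2 = -‖w - y‖ ^ 2 / (2 * σ ^ 2) from by ring]
    rw [h3] at h2
    refine h2.congr_fderiv ?_
    ext h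
    simp only [hF', ContinuousLinearMap.smul_apply, innerSL_apply_apply, ContinuousLinearMap.coe_smul',
      Pi.smul_apply, ContinuousLinearMap.coe_comp', Function.comp_apply,
      ContinuousLinearMap.neg_apply, ContinuousLinearMap.coe_id', id_eq, inner_neg_right,
      smul_eq_mul, nsmul_eq_mul, Nat.cast_ofNat]
    ring
  -- norm of F'
  have hnorm : ∀ (x w : EuclideanSpace ℝ (Fin d)),
      ‖F' x w‖ = C * rexp (-‖w - x‖ ^ 2 / (2 * σ ^ 2)) * k w * (σ ^ 2)⁻¹ * ‖w - x‖ := by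
    intro x w
    simp only [hF']
    rw [norm_smul (C * rexp (-‖w - x‖ ^ 2 / (2 * σ ^ 2)) * k w * (σ ^ 2)⁻¹)
        ((innerSL ℝ) (w - x)), innerSL_apply_norm, Real.norm_eq_abs,
      abs_of_nonneg (by have := hk0 w; positivity)]
  -- domination bound
  set bound : EuclideanSpace ℝ (Fin d) → ℝ := fun w =>
    (C * (σ ^ 2)⁻¹) * ((rexp (‖w - μ‖ / σ) * rexp (-‖w - μ‖ ^ 2 / (2 * σ ^ 2))) *
      (M * (‖w - μ‖ + σ))) with hbd
  have h_bound : ∀ (w : EuclideanSpace ℝ (Fin d)), ∀ x ∈ Metric.ball μ σ,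
      ‖F' x w‖ ≤ bound w := by
    intro w x hx
    have hxμ : ‖μ - x‖ ≤ σ := by
      have h := Metric.mem_ball.mp hx
      rw [dist_eq_norm] at h
      rw [show μ - x = -(x - μ) from by abel, norm_neg]
      exact h.le
    have htri : ‖w - x‖ ≤ ‖w - μ‖ + σ := by
      calc ‖w - x‖ = ‖(w - μ) + (μ - x)‖ := by rw [sub_add_sub_cancel]
        _ ≤ ‖w - μ‖ + ‖μ - x‖ := norm_add_le _ _
        _ ≤ ‖w - μ‖ + σ := by linarith
    have hexp : rexp (-‖w - x‖ ^ 2 / (2 * σ ^ 2)) ≤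
        rexp (‖w - μ‖ / σ) * rexp (-‖w - μ‖ ^ 2 / (2 * σ ^ 2)) := by
      rw [← Real.exp_add]
      apply Real.exp_le_exp.mpr
      have hsq : ‖w - μ‖ ^ 2 - 2 * σ * ‖w - μ‖ ≤ ‖w - x‖ ^ 2 := by
        have hid : w - x = (w - μ) + (μ - x) := by rw [sub_add_sub_cancel]
        rw [hid, norm_add_sq_real]
        have hi := abs_real_inner_le_norm (w - μ) (μ - x)
        nlinarith [neg_abs_le (inner ℝ (w - μ) (μ - x) : ℝ),
          mul_le_mul_of_nonneg_left hxμ (norm_nonneg (w - μ)), sq_nonneg ‖μ - x‖]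
      have e1 : ‖w - μ‖ / σ + -‖w - μ‖ ^ 2 / (2 * σ ^ 2)
          = (2 * σ * ‖w - μ‖ - ‖w - μ‖ ^ 2) / (2 * σ ^ 2) := by
        field_simp; ring
      have e0 : -‖w - x‖ ^ 2 / (2 * σ ^ 2) ≤ (2 * σ * ‖w - μ‖ - ‖w - μ‖ ^ 2) / (2 * σ ^ 2) := by
        have hc : (0:ℝ) < 2 * σ ^ 2 := by positivity
        rw [div_le_div_iff₀ hc hc]
        nlinarith [hsq]
      linarith [e1 ▸ e0]
    rw [hnorm x w]
    calc C * rexp (-‖w - x‖ ^ 2 / (2 * σ ^ 2)) * k w * (σ ^ 2)⁻¹ * ‖w - x‖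
        = (C * (σ ^ 2)⁻¹) * (rexp (-‖w - x‖ ^ 2 / (2 * σ ^ 2)) * (k w * ‖w - x‖)) := by ring
      _ ≤ (C * (σ ^ 2)⁻¹) * ((rexp (‖w - μ‖ / σ) * rexp (-‖w - μ‖ ^ 2 / (2 * σ ^ 2))) *
            (M * (‖w - μ‖ + σ))) := by
          apply mul_le_mul_of_nonneg_left _ (by positivity)
          apply mul_le_mul hexp
            (mul_le_mul (hkM w) htri (norm_nonneg _) hM.le)
            (mul_nonneg (hk0 w) (norm_nonneg _)) (by positivity)
      _ = bound w := rfl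
  -- integrability of the bound
  have hbi : Integrable bound := by
    have h4 : (0:ℝ) < (4 * σ ^ 2)⁻¹ := by positivity
    refine (((aux_int_exp h4).comp_sub_right μ).const_mul
        (C * (σ ^ 2)⁻¹ * (M * (σ * rexp 4)))).mono'
      (Continuous.aestronglyMeasurable (by unfold bound; fun_prop)) ?_
    refine Filter.Eventually.of_forall fun w => ?_
    set t : ℝ := ‖w - μ‖ with htdef
    have ht : 0 ≤ t := norm_nonneg _
    have hbw : 0 ≤ bound w := by
      rw [hbd]
      exact mul_nonneg (by positivity)
        (mul_nonneg (by positivity) (mul_nonneg hM.le (by positivity)))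
    rw [Real.norm_eq_abs, abs_of_nonneg hbw]
    have h1 : t + σ ≤ σ * rexp (t / σ) := by
      have ha := Real.add_one_le_exp (t / σ)
      have := mul_le_mul_of_nonneg_left ha hσ.le
      rw [mul_add, mul_one, mul_div_cancel₀ _ hσ.ne'] at this
      linarith
    have h3 : t / σ + (t / σ + -t ^ 2 / (2 * σ ^ 2)) ≤ 4 + -((4 * σ ^ 2)⁻¹ * t ^ 2) := by
      have e1 : t / σ + (t / σ + -t ^ 2 / (2 * σ ^ 2)) = (8 * t * σ - 2 * t ^ 2) / (4 * σ ^ 2) := by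
        field_simp; ring
      have e2 : 4 + -((4 * σ ^ 2)⁻¹ * t ^ 2) = (16 * σ ^ 2 - t ^ 2) / (4 * σ ^ 2) := by
        field_simp; ring
      rw [e1, e2]
      have hc : (0:ℝ) < 4 * σ ^ 2 := by positivity
      rw [div_le_div_iff₀ hc hc]
      nlinarith [sq_nonneg (t - 4 * σ), hc]
    calc bound w
        = (C * (σ ^ 2)⁻¹ * M) * ((t + σ) * (rexp (t / σ) * rexp (-t ^ 2 / (2 * σ ^ 2)))) := by
          rw [hbd]; ring
      _ ≤ (C * (σ ^ 2)⁻¹ * M) * ((σ * rexp (t / σ)) * (rexp (t / σ) * rexp (-t ^ 2 / (2 * σ ^ 2)))) := by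
          apply mul_le_mul_of_nonneg_left
            (mul_le_mul_of_nonneg_right h1 (by positivity))
            (mul_nonneg (by positivity) hM.le)
      _ = (C * (σ ^ 2)⁻¹ * (M * σ)) * rexp (t / σ + (t / σ + -t ^ 2 / (2 * σ ^ 2))) := by
          rw [Real.exp_add, Real.exp_add]; ring
      _ ≤ (C * (σ ^ 2)⁻¹ * (M * σ)) * rexp (4 + -((4 * σ ^ 2)⁻¹ * t ^ 2)) := by
          apply mul_le_mul_of_nonneg_left (Real.exp_le_exp.mpr h3)
            (mul_nonneg (by positivity) (mul_nonneg hM.le hσ.le))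
      _ = C * (σ ^ 2)⁻¹ * (M * (σ * rexp 4)) * rexp (-(4 * σ ^ 2)⁻¹ * ‖w - μ‖ ^ 2) := by
          rw [Real.exp_add, ← htdef, neg_mul]; ring
  -- integrability of F
  have hF_int : Integrable (fun w : EuclideanSpace ℝ (Fin d) =>
      C * rexp (-‖w - μ‖ ^ 2 / (2 * σ ^ 2)) * k w) := by
    refine (((aux_int_exp hbpos).comp_sub_right μ).const_mul (C * M)).mono'
      ((Continuous.aestronglyMeasurable (by fun_prop)).mul hmeas.aestronglyMeasurable) ?_
    refine Filter.Eventually.of_forall fun w => ?_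
    rw [Real.norm_eq_abs, abs_of_nonneg (mul_nonneg (by positivity) (hk0 w))]
    have hearg : -‖w - μ‖ ^ 2 / (2 * σ ^ 2) = -b * ‖w - μ‖ ^ 2 := by rw [hb]; ring
    rw [hearg]
    calc C * rexp (-b * ‖w - μ‖ ^ 2) * k w
        ≤ C * rexp (-b * ‖w - μ‖ ^ 2) * M :=
          mul_le_mul_of_nonneg_left (hkM w) (by positivity)
      _ = C * M * rexp (-b * ‖w - μ‖ ^ 2) := by ring
  -- measurability of F'
  have hF'_meas : AEStronglyMeasurable (F' μ) volume := by
    rw [hF']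
    apply AEStronglyMeasurable.smul (f := fun w => C * rexp (-‖w - μ‖ ^ 2 / (2 * σ ^ 2)) * k w * (σ ^ 2)⁻¹)
      (g := fun w => innerSL ℝ (w - μ))
    · exact (Continuous.aestronglyMeasurable (by fun_prop)).mul
        hmeas.aestronglyMeasurable |>.mul aestronglyMeasurable_const
    · exact ((innerSL ℝ).continuous.comp (continuous_id.sub continuous_const)).aestronglyMeasurable
  -- apply parametric differentiation under the integral
  have hF_meas : ∀ᶠ x in nhds μ, AEStronglyMeasurable
      (fun w : EuclideanSpace ℝ (Fin d) => C * rexp (-‖w - x‖ ^ 2 / (2 * σ ^ 2)) * k w) volume :=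
    Filter.Eventually.of_forall fun x =>
      (Continuous.aestronglyMeasurable (by fun_prop)).mul hmeas.aestronglyMeasurable
  have hD : HasFDerivAt (fun x : EuclideanSpace ℝ (Fin d) =>
      ∫ w, C * rexp (-‖w - x‖ ^ 2 / (2 * σ ^ 2)) * k w)
      (∫ w, F' μ w) μ :=
    hasFDerivAt_integral_of_dominated_of_fderiv_le (Metric.ball_mem_nhds μ hσ) hF_meas hF_int hF'_meas
      (Filter.Eventually.of_forall h_bound) hbi
      (Filter.Eventually.of_forall fun w x _ => hdiff w x)
  have hgs : HasFDerivAt (gaussSmooth d σ k) (∫ w, F' μ w) μ := hD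
  have hgrad : ‖gradient (gaussSmooth d σ k) μ‖ = ‖∫ w, F' μ w‖ := by
    rw [hgs.hasGradientAt.gradient]
    exact LinearIsometryEquiv.norm_map _ _
  -- bound the norm of the derivative
  set bound2 : EuclideanSpace ℝ (Fin d) → ℝ := fun w =>
    (C * (σ ^ 2)⁻¹ * M) * (‖w - μ‖ * rexp (-b * ‖w - μ‖ ^ 2)) with hbd2
  have hb2i : Integrable bound2 := ((aux_int_norm hbpos).comp_sub_right μ).const_mul _
  have hDnorm : ‖∫ w, F' μ w‖ ≤ ∫ w, bound2 w := by
    refine norm_integral_le_of_norm_le hb2i (Filter.Eventually.of_forall fun w => ?_)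
    rw [hnorm μ w, show -‖w - μ‖ ^ 2 / (2 * σ ^ 2) = -b * ‖w - μ‖ ^ 2 from by rw [hb]; ring]
    calc C * rexp (-b * ‖w - μ‖ ^ 2) * k w * (σ ^ 2)⁻¹ * ‖w - μ‖
        = (C * rexp (-b * ‖w - μ‖ ^ 2) * (σ ^ 2)⁻¹ * ‖w - μ‖) * k w := by ring
      _ ≤ (C * rexp (-b * ‖w - μ‖ ^ 2) * (σ ^ 2)⁻¹ * ‖w - μ‖) * M :=
          mul_le_mul_of_nonneg_left (hkM w) (by positivity)
      _ = bound2 w := by rw [hbd2]; ring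
  have hint2 : ∫ w, bound2 w = (C * (σ ^ 2)⁻¹ * M) *
      ∫ v : EuclideanSpace ℝ (Fin d), ‖v‖ * rexp (-b * ‖v‖ ^ 2) := by
    rw [hbd2, integral_const_mul]
    congr 1
    exact integral_sub_right_eq_self (fun v : EuclideanSpace ℝ (Fin d) => ‖v‖ * rexp (-b * ‖v‖ ^ 2)) μ
  -- AM-GM step
  set t0 : ℝ := σ * Real.sqrt d with ht0
  have hd0 : (0:ℝ) < d := by
    have : 0 < d := lt_of_lt_of_le Nat.zero_lt_one hd
    exact_mod_cast this
  have hs0 : 0 < Real.sqrt d := Real.sqrt_pos.mpr hd0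
  have ht0pos : 0 < t0 := mul_pos hσ hs0
  have hAM : (∫ v : EuclideanSpace ℝ (Fin d), ‖v‖ * rexp (-b * ‖v‖ ^ 2))
      ≤ (2 * t0)⁻¹ * (∫ v : EuclideanSpace ℝ (Fin d), ‖v‖ ^ 2 * rexp (-b * ‖v‖ ^ 2))
        + (t0 / 2) * (∫ v : EuclideanSpace ℝ (Fin d), rexp (-b * ‖v‖ ^ 2)) := by
    rw [← integral_const_mul, ← integral_const_mul, ← integral_add
      ((aux_int_sq hbpos).const_mul _) ((aux_int_exp hbpos).const_mul _)]
    refine integral_mono_of_nonneg (Filter.Eventually.of_forall fun v => by positivity)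
      (((aux_int_sq hbpos).const_mul _).add ((aux_int_exp hbpos).const_mul _))
      (Filter.Eventually.of_forall fun v => ?_)
    have hx : ‖v‖ ≤ (2 * t0)⁻¹ * ‖v‖ ^ 2 + t0 / 2 := by
      have hx1 : ‖v‖ ≤ (‖v‖ ^ 2 + t0 ^ 2) / (2 * t0) := by
        rw [le_div_iff₀ (by positivity)]
        nlinarith [sq_nonneg (‖v‖ - t0)]
      have hx2 : (‖v‖ ^ 2 + t0 ^ 2) / (2 * t0) = (2 * t0)⁻¹ * ‖v‖ ^ 2 + t0 / 2 := by
        field_simp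
      linarith [hx2 ▸ hx1]
    calc ‖v‖ * rexp (-b * ‖v‖ ^ 2)
        ≤ ((2 * t0)⁻¹ * ‖v‖ ^ 2 + t0 / 2) * rexp (-b * ‖v‖ ^ 2) :=
          mul_le_mul_of_nonneg_right hx (Real.exp_pos _).le
      _ = (2 * t0)⁻¹ * (‖v‖ ^ 2 * rexp (-b * ‖v‖ ^ 2)) + t0 / 2 * rexp (-b * ‖v‖ ^ 2) := by ring
  -- closed forms
  have hCP : C * (π ^ ((d:ℝ) / 2) * b ^ (-(d:ℝ) / 2)) = 1 := by
    rw [hC, hb]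
    rw [show ((2 * σ ^ 2)⁻¹ : ℝ) ^ (-(d:ℝ) / 2) = ((2 * σ ^ 2 : ℝ)) ^ ((d:ℝ) / 2) from by
      rw [Real.inv_rpow (by positivity), ← Real.rpow_neg (by positivity), neg_div, neg_neg]]
    rw [← Real.mul_rpow Real.pi_pos.le (by positivity),
      show (2 * π * σ ^ 2 : ℝ) = π * (2 * σ ^ 2) from by ring,
      ← Real.rpow_add (by positivity)]
    rw [show (-(d:ℝ) / 2 + (d:ℝ) / 2) = 0 from by ring, Real.rpow_zero]
  have hbinv : b⁻¹ = 2 * σ ^ 2 := by rw [hb, inv_inv]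
  have hsqd : Real.sqrt d * Real.sqrt d = (d:ℝ) := Real.mul_self_sqrt hd0.le
  have hnum : (C * (σ ^ 2)⁻¹ * M) * ((2 * t0)⁻¹ * ((d:ℝ) / 2 * π ^ ((d:ℝ)/2) * (b ^ (-(d:ℝ)/2) * b⁻¹))
      + (t0 / 2) * (π ^ ((d:ℝ)/2) * b ^ (-(d:ℝ)/2))) = M * Real.sqrt d / σ := by
    have expand : (C * (σ ^ 2)⁻¹ * M) * ((2 * t0)⁻¹ * ((d:ℝ) / 2 * π ^ ((d:ℝ)/2) * (b ^ (-(d:ℝ)/2) * b⁻¹))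
        + (t0 / 2) * (π ^ ((d:ℝ)/2) * b ^ (-(d:ℝ)/2)))
        = (M * (σ ^ 2)⁻¹) * (C * (π ^ ((d:ℝ)/2) * b ^ (-(d:ℝ)/2)))
          * ((2 * t0)⁻¹ * ((d:ℝ) / 2) * b⁻¹ + t0 / 2) := by ring
    rw [expand, hCP, mul_one, hbinv, ht0]
    field_simp
    linear_combination (-1) * hsqd
  -- finish
  have hfinal : ‖gradient (gaussSmooth d σ k) μ‖ ≤ M * Real.sqrt d / σ := by
    rw [hgrad]
    refine le_trans hDnorm ?_
    rw [hint2]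
    calc (C * (σ ^ 2)⁻¹ * M) * ∫ v : EuclideanSpace ℝ (Fin d), ‖v‖ * rexp (-b * ‖v‖ ^ 2)
        ≤ (C * (σ ^ 2)⁻¹ * M) *
            ((2 * t0)⁻¹ * (∫ v : EuclideanSpace ℝ (Fin d), ‖v‖ ^ 2 * rexp (-b * ‖v‖ ^ 2))
              + (t0 / 2) * (∫ v : EuclideanSpace ℝ (Fin d), rexp (-b * ‖v‖ ^ 2))) :=
          mul_le_mul_of_nonneg_left hAM (mul_nonneg (by positivity) hM.le)
      _ = (C * (σ ^ 2)⁻¹ * M) * ((2 * t0)⁻¹ * ((d:ℝ) / 2 * π ^ ((d:ℝ)/2) * (b ^ (-(d:ℝ)/2) * b⁻¹))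
            + (t0 / 2) * (π ^ ((d:ℝ)/2) * b ^ (-(d:ℝ)/2))) := by
          rw [aux_moment hbpos, aux_I0 hbpos]
      _ = M * Real.sqrt d / σ := hnum
  have h2 := pow_le_pow_left₀ (norm_nonneg _) hfinal 2
  refine le_trans h2 (le_of_eq ?_)
  rw [div_pow, mul_pow, Real.sq_sqrt hd0.le]
  ring
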